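/- Fix α ∈ (−1,1), a real γ ≥ 1, an integer p ≥ 1 with γ(α+1) < p+1, and a constant K > 0. Then there exists a constant C > 0 such that for every integer m ≥ 2 the following holds: with mesh points x_j = (j/m)^γ (j = 0, …, m) and widths h_j = x_j − x_{j−1}, for any nonnegative reals e_1, …, e_m satisfying e_1 ≤ K·h_1^{α+1} and e_j ≤ K·h_j^{p+2}·x_{j−1}^{α−p−1} for all 2 ≤ j ≤ m, one has Σ_{j=1}^m e_j ≤ C · m^{−γ(α+1)}. All real powers are Real.rpow. -/

import Mathlib

open scoped BigOperators

/-- Convergence of the `h` method with algebraic grading, sub-critical case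
`γ(α+1) < p+1`: the total error is bounded by `C · m^{-γ(α+1)}`. -/
theorem h_method_subcritical_grading (α γ : ℝ) (p : ℤ) (K : ℝ)
    (hα₁ : -1 < α) (hα₂ : α < 1) (hγ : 1 ≤ γ) (hp : 1 ≤ p) (hcrit : γ * (α + 1) < (p : ℝ) + 1) (hK : 0 < K) :
    ∃ C > 0, ∀ m : ℕ, 2 ≤ m →
      ∀ x h e : ℕ → ℝ,
        (∀ j, j ≤ m → x j = ((j : ℝ) / m) ^ γ) →
        (∀ j, 1 ≤ j → j ≤ m → h j = x j - x (j - 1)) →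
        (∀ j, 1 ≤ j → j ≤ m → 0 ≤ e j) →
        e 1 ≤ K * h 1 ^ (α + 1) →
        (∀ j, 2 ≤ j → j ≤ m →
          e j ≤ K * h j ^ ((p : ℝ) + 2) * x (j - 1) ^ (α - p - 1)) →
        ∑ j ∈ Finset.Icc 1 m, e j ≤ C * (m : ℝ) ^ (-(γ * (α + 1))) := by
  have hγ0 : (0:ℝ) < γ := lt_of_lt_of_le one_pos hγ
  have hp1 : (1:ℝ) ≤ (p:ℝ) := by exact_mod_cast hp
  set s : ℝ := γ * (α + 1) - (p:ℝ) - 2 with hs_def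
  have hs : s < -1 := by rw [hs_def]; linarith
  have hsum : Summable (fun n : ℕ => (n:ℝ) ^ s) := Real.summable_nat_rpow.mpr hs
  set S : ℝ := ∑' n : ℕ, (n:ℝ) ^ s with hS_def
  have hS0 : 0 ≤ S := tsum_nonneg fun n => Real.rpow_nonneg (Nat.cast_nonneg n) s
  set q : ℝ := (p:ℝ) + 2 with hq_def
  have hq0 : (0:ℝ) < q := by rw [hq_def]; linarith
  set r : ℝ := γ * (α - (p:ℝ) - 1) with hr_def
  have hr0 : r ≤ 0 := by
    rw [hr_def]
    exact mul_nonpos_of_nonneg_of_nonpos hγ0.le (by linarith)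
  set A : ℝ := K * γ ^ q * 2 ^ (-r) with hA_def
  have hγq : 0 < γ ^ q := Real.rpow_pos_of_pos hγ0 q
  have h2r : 0 < (2:ℝ) ^ (-r) := Real.rpow_pos_of_pos two_pos (-r)
  have hA0 : 0 < A := by rw [hA_def]; exact mul_pos (mul_pos hK hγq) h2r
  refine ⟨K + A * S, by positivity, ?_⟩
  intro m hm x h e hx hh he he1 hej
  have hM : (0:ℝ) < (m:ℝ) := by
    have : 0 < m := by omega
    exact_mod_cast this
  set M : ℝ := (m:ℝ) with hM_def
  set E : ℝ := M ^ (-(γ * (α + 1))) with hE_def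
  have hE0 : 0 < E := Real.rpow_pos_of_pos hM _
  -- bound on the first term
  have hx0 : x 0 = 0 := by
    rw [hx 0 (by omega)]
    simp [Real.zero_rpow (ne_of_gt hγ0)]
  have hx1 : x 1 = (1 / M) ^ γ := by rw [hx 1 (by omega)]; norm_num
  have hone : e 1 ≤ K * E := by
    have hh1 : h 1 = (1 / M) ^ γ := by
      rw [hh 1 le_rfl (by omega)]; simp [hx1, hx0]
    have hE : h 1 ^ (α + 1) = E := by
      rw [hh1, ← Real.rpow_mul (by positivity), hE_def, one_div,
        Real.inv_rpow hM.le, ← Real.rpow_neg hM.le]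
    calc e 1 ≤ K * h 1 ^ (α + 1) := he1
      _ = K * E := by rw [hE]
  -- key per-term bound for j ≥ 2
  have key : ∀ j, 2 ≤ j → j ≤ m → e j ≤ A * (j:ℝ) ^ s * E := by
    intro j hj2 hjm
    have hJ2 : (2:ℝ) ≤ (j:ℝ) := by exact_mod_cast hj2
    set J : ℝ := (j:ℝ) with hJ_def
    have hJ0 : 0 < J := by linarith
    set u : ℝ := J / M with hu_def
    set v : ℝ := (J - 1) / M with hv_def
    have hu0 : 0 < u := div_pos hJ0 hM
    have hv0 : 0 < v := div_pos (by linarith) hM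
    have hune : u ≠ 0 := ne_of_gt hu0
    have hMne : M ≠ 0 := ne_of_gt hM
    have hvu : v ≤ u := by
      rw [hu_def, hv_def]
      gcongr
      linarith
    have huv : u - v = 1 / M := by
      rw [hu_def, hv_def]
      field_simp
      ring
    have hvcast : ((j - 1 : ℕ) : ℝ) = J - 1 := by
      rw [Nat.cast_sub (by omega : 1 ≤ j), Nat.cast_one, hJ_def]
    have hxj1 : x (j - 1) = v ^ γ := by rw [hx (j-1) (by omega), hvcast, hv_def]
    have hhj : h j = u ^ γ - v ^ γ := by
      rw [hh j (by omega) hjm, hx j hjm, hxj1, hu_def]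
    have hug0 : 0 < u ^ γ := Real.rpow_pos_of_pos hu0 γ
    have hvg0 : 0 < v ^ γ := Real.rpow_pos_of_pos hv0 γ
    -- Bernoulli step
    have htu : v / u ≤ 1 := (div_le_one hu0).mpr hvu
    have htu0 : 0 ≤ v / u := le_of_lt (div_pos hv0 hu0)
    have hber : 1 + γ * (v / u - 1) ≤ (v / u) ^ γ := by
      have := one_add_mul_self_le_rpow_one_add (s := v / u - 1) (by linarith) hγ
      simpa using this
    have hvg : v ^ γ = u ^ γ * (v / u) ^ γ := by
      rw [← Real.mul_rpow hu0.le htu0]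
      congr 1
      field_simp
    have hmean : u ^ γ - v ^ γ ≤ γ * u ^ γ / (u * M) := by
      have h1 : u ^ γ * (1 + γ * (v / u - 1)) ≤ v ^ γ := by
        rw [hvg]; exact mul_le_mul_of_nonneg_left hber hug0.le
      have h4 : γ * u ^ γ / (u * M) = u ^ γ * (γ * (1 - v * u⁻¹)) := by
        have h5 : (1:ℝ) - v * u⁻¹ = (u - v) * u⁻¹ := by field_simp
        rw [h5, huv]
        field_simp
      rw [h4]
      rw [div_eq_mul_inv] at h1
      ring_nf at h1 ⊢
      linarith
    -- putting the pieces together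
    have hbase0 : 0 < γ * u ^ γ / (u * M) := div_pos (mul_pos hγ0 hug0) (mul_pos hu0 hM)
    have hh0 : 0 ≤ h j := by
      rw [hhj]; exact sub_nonneg.mpr (Real.rpow_le_rpow hv0.le hvu hγ0.le)
    have hB : h j ^ q ≤ (γ * u ^ γ / (u * M)) ^ q := by
      apply Real.rpow_le_rpow hh0 _ hq0.le
      rw [hhj]; exact hmean
    have hxv : x (j-1) ^ (α - (p:ℝ) - 1) = v ^ r := by
      rw [hxj1, ← Real.rpow_mul hv0.le, ← hr_def]
    have hu20 : 0 < u / 2 := by linarith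
    have hC : x (j-1) ^ (α - (p:ℝ) - 1) ≤ (u / 2) ^ r := by
      rw [hxv]
      apply Real.rpow_le_rpow_of_nonpos hu20 ?_ hr0
      rw [hu_def, hv_def]
      rw [show J / M / 2 = (J / 2) / M by ring]
      gcongr
      linarith
    have hBq0 : 0 ≤ (γ * u ^ γ / (u * M)) ^ q := (Real.rpow_pos_of_pos hbase0 q).le
    have hD : e j ≤ K * (γ * u ^ γ / (u * M)) ^ q * (u / 2) ^ r := by
      have hEj := hej j hj2 hjm
      calc e j ≤ K * h j ^ q * x (j-1) ^ (α - (p:ℝ) - 1) := hEj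
        _ ≤ K * (γ * u ^ γ / (u * M)) ^ q * x (j-1) ^ (α - (p:ℝ) - 1) := by
            apply mul_le_mul_of_nonneg_right (mul_le_mul_of_nonneg_left hB hK.le)
            rw [hxv]; exact (Real.rpow_pos_of_pos hv0 r).le
        _ ≤ K * (γ * u ^ γ / (u * M)) ^ q * (u / 2) ^ r :=
            mul_le_mul_of_nonneg_left hC (mul_nonneg hK.le hBq0)
    -- the algebraic identity
    have hEq : K * (γ * u ^ γ / (u * M)) ^ q * (u / 2) ^ r = A * J ^ s * E := by
      have e1 : γ * u ^ γ / (u * M) = γ * u ^ (γ - 1) / M := by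
        rw [Real.rpow_sub hu0, Real.rpow_one]; ring
      rw [e1, Real.div_rpow (mul_nonneg hγ0.le (Real.rpow_pos_of_pos hu0 _).le) hM.le,
        Real.mul_rpow hγ0.le (Real.rpow_pos_of_pos hu0 _).le,
        ← Real.rpow_mul hu0.le,
        Real.div_rpow hu0.le (by norm_num : (0:ℝ) ≤ 2)]
      have hus : u ^ ((γ - 1) * q) * u ^ r = J ^ s * (M ^ s)⁻¹ := by
        rw [← Real.rpow_add hu0]
        rw [show (γ - 1) * q + r = s by rw [hq_def, hr_def, hs_def]; ring]
        rw [hu_def, Real.div_rpow hJ0.le hM.le, div_eq_mul_inv]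
      have hMsq : M ^ s * M ^ q = E⁻¹ := by
        rw [← Real.rpow_add hM, hE_def, Real.rpow_neg hM.le, inv_inv]
        congr 1
        rw [hs_def, hq_def]; ring
      have hE' : E = (M ^ s)⁻¹ * (M ^ q)⁻¹ := by
        rw [← mul_inv, hMsq, inv_inv]
      rw [hA_def, Real.rpow_neg (by norm_num : (0:ℝ) ≤ 2), hE']
      rw [show K * (γ ^ q * u ^ ((γ - 1) * q) / M ^ q) * (u ^ r / 2 ^ r)
          = K * γ ^ q * (u ^ ((γ - 1) * q) * u ^ r) * (M ^ q)⁻¹ * (2 ^ r)⁻¹ by ring]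
      rw [hus]
      ring
    calc e j ≤ K * (γ * u ^ γ / (u * M)) ^ q * (u / 2) ^ r := hD
      _ = A * J ^ s * E := hEq
  -- assemble the sum
  have hsplit : Finset.Icc 1 m = insert 1 (Finset.Icc 2 m) := by
    ext a; simp only [Finset.mem_Icc, Finset.mem_insert]; omega
  have hnot : (1:ℕ) ∉ Finset.Icc 2 m := by simp
  rw [hsplit, Finset.sum_insert hnot]
  have htail : ∑ j ∈ Finset.Icc 2 m, e j ≤ (A * E) * S := by
    calc ∑ j ∈ Finset.Icc 2 m, e j ≤ ∑ j ∈ Finset.Icc 2 m, (A * E) * (j:ℝ) ^ s := by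
          apply Finset.sum_le_sum
          intro j hj
          rw [Finset.mem_Icc] at hj
          calc e j ≤ A * (j:ℝ) ^ s * E := key j hj.1 hj.2
            _ = (A * E) * (j:ℝ) ^ s := by ring
      _ = (A * E) * ∑ j ∈ Finset.Icc 2 m, (j:ℝ) ^ s := by rw [Finset.mul_sum]
      _ ≤ (A * E) * S := by
          apply mul_le_mul_of_nonneg_left _ (mul_pos hA0 hE0).le
          exact Summable.sum_le_tsum _ (fun i _ => Real.rpow_nonneg (Nat.cast_nonneg i) s) hsum
  calc e 1 + ∑ j ∈ Finset.Icc 2 m, e j ≤ K * E + (A * E) * S := add_le_add hone htail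
    _ = (K + A * S) * E := by ring
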